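/- Let δ ∈ (0,1] and suppose every eigenvalue λ of the real symmetric matrix D^{1/2} P D^{-1/2} with λ ≠ 1 satisfies λ ≤ 1 − δ (P has spectral gap at least δ). Let M ⊆ V be nonempty, let ε := Σ_{v∈M} π_v, and define ξ ∈ ℝ^V by ξ_v := π_v for v ∉ M and ξ_v := π_v (1 − 1/ε) for v ∈ M. Then ξᵀ (D(I − P))⁺ ξ ≤ (1/ε − 1)/δ ≤ 1/(δ ε). -/

import Mathlib

open Matrix

/-- `B` is the Moore–Penrose pseudoinverse of `A`. -/
def IsMoorePenrose {n : Type*} [Fintype n] (A B : Matrix n n ℝ) : Prop :=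
  A * B * A = A ∧ B * A * B = B ∧ (A * B)ᵀ = A * B ∧ (B * A)ᵀ = B * A

lemma mp_unique {n : Type*} [Fintype n] (A B C : Matrix n n ℝ)
    (hB : IsMoorePenrose A B) (hC : IsMoorePenrose A C) : B = C := by
  obtain ⟨hB1, hB2, hB3, hB4⟩ := hB
  obtain ⟨hC1, hC2, hC3, hC4⟩ := hC
  have hAB : A * B = A * C := by
    have h1 : (A * C) * (A * B) = A * B := by
      rw [← Matrix.mul_assoc, hC1]
    have h2 : (A * C) * (A * B) = A * C := by
      calc (A * C) * (A * B) = ((A * B) * (A * C))ᵀ := by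
            rw [transpose_mul, hB3, hC3]
        _ = ((A * B * A) * C)ᵀ := by rw [Matrix.mul_assoc (A*B) A C, Matrix.mul_assoc]
        _ = A * C := by rw [hB1, hC3]
    rw [← h1, h2]
  have hBA : B * A = C * A := by
    have h1 : (B * A) * (C * A) = B * A := by
      rw [Matrix.mul_assoc, ← Matrix.mul_assoc A C A, hC1]
    have h2 : (B * A) * (C * A) = C * A := by
      calc (B * A) * (C * A) = ((C * A) * (B * A))ᵀ := by
            rw [transpose_mul, hB4, hC4]
        _ = (C * (A * B * A))ᵀ := by rw [Matrix.mul_assoc C A (B*A), Matrix.mul_assoc A B A]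
        _ = C * A := by rw [hB1, hC4]
    rw [← h1, h2]
  calc B = B * A * B := hB2.symm
    _ = B * (A * C) := by rw [Matrix.mul_assoc, hAB]
    _ = (C * A) * C := by rw [← Matrix.mul_assoc, hBA]
    _ = C := hC2

lemma mp_transpose {n : Type*} [Fintype n] (A B : Matrix n n ℝ)
    (h : IsMoorePenrose A B) : IsMoorePenrose Aᵀ Bᵀ := by
  obtain ⟨h1, h2, h3, h4⟩ := h
  refine ⟨?_, ?_, ?_, ?_⟩
  · rw [← transpose_mul, ← transpose_mul, ← Matrix.mul_assoc, h1]
  · rw [← transpose_mul, ← transpose_mul, ← Matrix.mul_assoc, h2]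
  · rw [← transpose_mul, transpose_transpose, h4]
  · rw [← transpose_mul, transpose_transpose, h3]

lemma mp_symm {n : Type*} [Fintype n] (A B : Matrix n n ℝ) (hA : Aᵀ = A)
    (h : IsMoorePenrose A B) : Bᵀ = B := by
  have h2 := mp_transpose A B h
  rw [hA] at h2
  exact (mp_unique A B Bᵀ h h2).symm


lemma pow_row_stochastic {V : Type*} [Fintype V] [DecidableEq V]
    (P : Matrix V V ℝ) (hPnonneg : ∀ v w, 0 ≤ P v w) (hProw : ∀ v, ∑ w, P v w = 1) :
    ∀ t : ℕ, (∀ v w, 0 ≤ (P ^ t) v w) ∧ (∀ v, ∑ w, (P ^ t) v w = 1) := by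
  intro t
  induction t with
  | zero =>
    constructor
    · intro v w
      simp [Matrix.one_apply]
      split <;> norm_num
    · intro v
      simp [Matrix.one_apply]
  | succ t ih =>
    rw [pow_succ]
    constructor
    · intro v w
      rw [Matrix.mul_apply]
      exact Finset.sum_nonneg fun u _ => mul_nonneg (ih.1 v u) (hPnonneg u w)
    · intro v
      simp only [Matrix.mul_apply]
      rw [Finset.sum_comm]
      calc ∑ u, ∑ w, (P ^ t) v u * P u w
          = ∑ u, (P ^ t) v u * ∑ w, P u w := by
            simp [Finset.mul_sum]
        _ = 1 := by simp [hProw, ih.2 v]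

lemma harmonic_const {V : Type*} [Fintype V] [DecidableEq V] [Nonempty V]
    (P : Matrix V V ℝ) (hPnonneg : ∀ v w, 0 ≤ P v w) (hProw : ∀ v, ∑ w, P v w = 1)
    (hirr : ∀ v w, ∃ t : ℕ, 1 ≤ t ∧ 0 < (P ^ t) v w)
    (z : V → ℝ) (hz : P *ᵥ z = z) : ∃ m : ℝ, ∀ v, z v = m := by
  have hzt : ∀ t : ℕ, (P ^ t) *ᵥ z = z := by
    intro t
    induction t with
    | zero => simp
    | succ t ih => rw [pow_succ, ← Matrix.mulVec_mulVec, hz, ih]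
  obtain ⟨v₀, -, hmax⟩ := Finset.exists_max_image Finset.univ z ⟨Classical.arbitrary V, Finset.mem_univ _⟩
  refine ⟨z v₀, fun w => ?_⟩
  obtain ⟨t, -, htpos⟩ := hirr v₀ w
  obtain ⟨hnn, hrow⟩ := pow_row_stochastic P hPnonneg hProw t
  have hv : ∑ u, (P ^ t) v₀ u * z u = z v₀ := congrFun (hzt t) v₀
  have h0 : ∑ u, (P ^ t) v₀ u * (z v₀ - z u) = 0 := by
    simp only [mul_sub]
    rw [Finset.sum_sub_distrib, ← Finset.sum_mul, hrow v₀, one_mul, hv, sub_self]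
  have hterm := (Finset.sum_eq_zero_iff_of_nonneg
    (fun u _ => mul_nonneg (hnn v₀ u) (sub_nonneg.2 (hmax u (Finset.mem_univ u))))).1 h0 w (Finset.mem_univ w)
  have := mul_eq_zero.1 hterm
  rcases this with h | h
  · exact absurd h (ne_of_gt htpos)
  · linarith

lemma spectral_bound {V : Type*} [Fintype V] [DecidableEq V] [Nonempty V]
    (P : Matrix V V ℝ) (π : V → ℝ)
    (hPnonneg : ∀ v w, 0 ≤ P v w) (hProw : ∀ v, ∑ w, P v w = 1)
    (hirr : ∀ v w, ∃ t : ℕ, 1 ≤ t ∧ 0 < (P ^ t) v w)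
    (hπpos : ∀ v, 0 < π v) (hπsum : ∑ v, π v = 1)
    (hrev : ∀ v w, π v * P v w = π w * P w v)
    (δ : ℝ) (hδ0 : 0 < δ)
    (hgap : ∀ (lam : ℝ) (y : V → ℝ), y ≠ 0 →
      (diagonal (fun v => Real.sqrt (π v)) * P *
          diagonal (fun v => (Real.sqrt (π v))⁻¹)) *ᵥ y = lam • y →
      lam ≠ 1 → lam ≤ 1 - δ) :
    ∀ y : V → ℝ, (fun v => Real.sqrt (π v)) ⬝ᵥ y = 0 →
      δ * (y ⬝ᵥ y) ≤ y ⬝ᵥ ((1 - (diagonal (fun v => Real.sqrt (π v)) * P *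
          diagonal (fun v => (Real.sqrt (π v))⁻¹))) *ᵥ y) := by
  set p : V → ℝ := fun v => Real.sqrt (π v) with hp
  have hp0 : ∀ v, 0 < p v := fun v => Real.sqrt_pos.2 (hπpos v)
  have hpv2 : ∀ v, p v * p v = π v := fun v => Real.mul_self_sqrt (hπpos v).le
  set S : Matrix V V ℝ := diagonal (fun v => Real.sqrt (π v)) * P *
      diagonal (fun v => (Real.sqrt (π v))⁻¹) with hS
  have hSapp : ∀ v w, S v w = p v * P v w * (p w)⁻¹ := by
    intro v w
    rw [hS, Matrix.mul_diagonal, Matrix.diagonal_mul]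
  have hSsymm : ∀ v w, S w v = S v w := by
    intro v w
    rw [hSapp, hSapp, ← div_eq_mul_inv, ← div_eq_mul_inv,
      div_eq_div_iff (hp0 v).ne' (hp0 w).ne']
    linear_combination P w v * hpv2 w - P v w * hpv2 v + hrev w v
  have hSp : S *ᵥ p = p := by
    funext v
    simp only [Matrix.mulVec, dotProduct]
    calc ∑ w, S v w * p w = ∑ w, p v * P v w := by
          refine Finset.sum_congr rfl fun w _ => ?_
          rw [hSapp, mul_assoc, inv_mul_cancel₀ (hp0 w).ne', mul_one]
      _ = p v := by rw [← Finset.mul_sum, hProw, mul_one]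
  have hpp : p ⬝ᵥ p = 1 := by
    simp only [dotProduct]
    rw [show ∑ v, p v * p v = ∑ v, π v from Finset.sum_congr rfl fun v _ => hpv2 v, hπsum]
  -- eigenvectors of S with eigenvalue 1 are multiples of p
  have heig1 : ∀ u : V → ℝ, S *ᵥ u = u → ∃ m : ℝ, ∀ v, u v = m * p v := by
    intro u hu
    have hz : P *ᵥ (fun v => u v * (p v)⁻¹) = fun v => u v * (p v)⁻¹ := by
      funext v
      have h1 : (S *ᵥ u) v = u v := congrFun hu v
      simp only [Matrix.mulVec, dotProduct, hSapp] at h1 ⊢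
      have : ∑ w, p v * P v w * (p w)⁻¹ * u w = p v * ∑ w, P v w * (u w * (p w)⁻¹) := by
        rw [Finset.mul_sum]; exact Finset.sum_congr rfl fun w _ => by ring
      rw [this] at h1
      rw [show ∑ w, P v w * (u w * (p w)⁻¹) = u v * (p v)⁻¹ by
        field_simp at h1 ⊢
        rw [eq_div_iff (hp0 v).ne']
        linarith [h1]]
    obtain ⟨m, hm⟩ := harmonic_const P hPnonneg hProw hirr _ hz
    refine ⟨m, fun v => ?_⟩
    have := hm v
    field_simp at this
    rw [div_eq_iff (hp0 v).ne'] at this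
    linarith [this]
  set ph : Matrix V V ℝ := vecMulVec p p with hph
  have hphmul : ∀ u : V → ℝ, ph *ᵥ u = (p ⬝ᵥ u) • p := by
    intro u; funext v
    simp only [Matrix.mulVec, dotProduct, hph, vecMulVec_apply, Pi.smul_apply,
      smul_eq_mul]
    rw [Finset.sum_mul]
    exact Finset.sum_congr rfl fun w _ => by ring
  set T : Matrix V V ℝ := (1 : Matrix V V ℝ) - S - δ • ((1 : Matrix V V ℝ) - ph) with hT
  have hTt : Tᵀ = T := by
    ext v w
    simp only [transpose_apply, hT, Matrix.sub_apply, Matrix.smul_apply, Matrix.one_apply,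
      hph, vecMulVec_apply, smul_eq_mul]
    by_cases h : v = w
    · subst h; rfl
    · simp only [h, Ne.symm h, if_false]
      rw [hSsymm v w]
      ring
  have hTherm : T.IsHermitian := by
    show Tᴴ = T
    have : Tᴴ = Tᵀ := by
      ext v w
      rw [conjTranspose_apply, transpose_apply, star_trivial]
    rw [this, hTt]
  have hTp : T *ᵥ p = 0 := by
    rw [hT]
    rw [Matrix.sub_mulVec, Matrix.sub_mulVec, Matrix.one_mulVec, Matrix.smul_mulVec,
      Matrix.sub_mulVec, Matrix.one_mulVec, hSp, hphmul, hpp, one_smul]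
    simp
  have hTpsd : T.PosSemidef := by
    apply (IsHermitian.posSemidef_iff_eigenvalues_nonneg hTherm).2
    intro i
    set μ := hTherm.eigenvalues i with hμ
    set u : V → ℝ := ⇑(hTherm.eigenvectorBasis i) with hu
    have hTu : T *ᵥ u = μ • u := hTherm.mulVec_eigenvectorBasis i
    have hune : u ≠ 0 := by
      have h := hTherm.eigenvectorBasis.orthonormal.ne_zero i
      intro h0
      apply h
      ext v
      exact congrFun h0 v
    have hμc : μ * (p ⬝ᵥ u) = 0 := by
      have h1 : p ⬝ᵥ (T *ᵥ u) = μ * (p ⬝ᵥ u) := by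
        rw [hTu, dotProduct_smul, smul_eq_mul]
      have h2 : p ⬝ᵥ (T *ᵥ u) = 0 := by
        rw [dotProduct_mulVec,
          show p ᵥ* T = 0 by rw [← Matrix.mulVec_transpose, hTt, hTp], zero_dotProduct]
      rw [← h1, h2]
    rcases eq_or_ne μ 0 with h | h
    · exact h.ge
    · have hc : p ⬝ᵥ u = 0 := by
        rcases mul_eq_zero.1 hμc with h' | h'
        · exact absurd h' h
        · exact h'
      have hSu : S *ᵥ u = (1 - δ - μ) • u := by
        have h3 := hTu
        rw [hT, Matrix.sub_mulVec, Matrix.sub_mulVec, Matrix.one_mulVec,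
          Matrix.smul_mulVec, Matrix.sub_mulVec, Matrix.one_mulVec, hphmul, hc,
          zero_smul] at h3
        funext v
        have hv := congrFun h3 v
        simp only [Pi.sub_apply, Pi.smul_apply, smul_eq_mul, sub_zero] at hv ⊢
        linarith [hv]
      rcases eq_or_ne (1 - δ - μ) 1 with h1 | h1
      · exfalso
        rw [h1, one_smul] at hSu
        obtain ⟨m, hm⟩ := heig1 u hSu
        have hm0 : m = 0 := by
          have hpu : p ⬝ᵥ u = m := by
            simp only [dotProduct]
            calc ∑ v, p v * u v = ∑ v, m * π v := by
                  refine Finset.sum_congr rfl fun v _ => ?_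
                  rw [hm v, ← hpv2 v]; ring
              _ = m := by rw [← Finset.mul_sum, hπsum, mul_one]
          rw [hc] at hpu; exact hpu.symm
        apply hune
        funext v
        rw [hm v, hm0, zero_mul]
        rfl
      · have := hgap (1 - δ - μ) u hune hSu h1
        change (0:ℝ) ≤ μ
        linarith
  intro y hy
  have h0 := hTpsd.dotProduct_mulVec_nonneg y
  have hsy : star y = y := by
    funext v
    rw [Pi.star_apply, star_trivial]
  rw [hsy] at h0
  have hTy : T *ᵥ y = (1 - S) *ᵥ y - δ • ((1 - ph) *ᵥ y) := by
    rw [hT, Matrix.sub_mulVec, Matrix.smul_mulVec]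
  have h2 : (1 - ph) *ᵥ y = y := by
    rw [Matrix.sub_mulVec, Matrix.one_mulVec, hphmul, hy, zero_smul, sub_zero]
  rw [hTy, h2, dotProduct_sub, dotProduct_smul, smul_eq_mul] at h0
  linarith
/-- For an irreducible, reversible Markov chain `P` with stationary
distribution `π` and spectral gap at least `δ`, a nonempty marked set `M ⊆ V` with
`ε := Σ_{v ∈ M} π_v`, and the net-flow `ξ = π - π|_M / ε` (i.e. `ξ_v = π_v` for `v ∉ M` and
`ξ_v = π_v (1 - 1/ε)` for `v ∈ M`), the effective resistance satisfies
`ξᵀ (D(I - P))⁺ ξ ≤ (1/ε - 1)/δ ≤ 1/(δ ε)`. -/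
theorem effective_resistance_stationary_to_marked
    {V : Type*} [Fintype V] [DecidableEq V] [Nonempty V]
    (P : Matrix V V ℝ) (π : V → ℝ)
    (hPnonneg : ∀ v w, 0 ≤ P v w) (hProw : ∀ v, ∑ w, P v w = 1)
    (hirr : ∀ v w, ∃ t : ℕ, 1 ≤ t ∧ 0 < (P ^ t) v w)
    (hπpos : ∀ v, 0 < π v) (hπsum : ∑ v, π v = 1)
    (hrev : ∀ v w, π v * P v w = π w * P w v)
    (δ : ℝ) (hδ0 : 0 < δ) (hδ1 : δ ≤ 1)
    (hgap : ∀ (lam : ℝ) (y : V → ℝ), y ≠ 0 →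
      (diagonal (fun v => Real.sqrt (π v)) * P *
          diagonal (fun v => (Real.sqrt (π v))⁻¹)) *ᵥ y = lam • y →
      lam ≠ 1 → lam ≤ 1 - δ)
    (M : Finset V) (hM : M.Nonempty)
    (ε : ℝ) (hε : ε = ∑ v ∈ M, π v)
    (ξ : V → ℝ) (hξ : ∀ v, ξ v = if v ∈ M then π v * (1 - 1 / ε) else π v)
    (Lplus : Matrix V V ℝ)
    (hLplus : IsMoorePenrose (diagonal π * (1 - P)) Lplus) :
    ξ ⬝ᵥ (Lplus *ᵥ ξ) ≤ (1 / ε - 1) / δ ∧ (1 / ε - 1) / δ ≤ 1 / (δ * ε) := by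
  have hεpos : 0 < ε := hε ▸ Finset.sum_pos (fun v _ => hπpos v) hM
  set p : V → ℝ := fun v => Real.sqrt (π v) with hp
  have hp0 : ∀ v, 0 < p v := fun v => Real.sqrt_pos.2 (hπpos v)
  have hpv2 : ∀ v, p v * p v = π v := fun v => Real.mul_self_sqrt (hπpos v).le
  set S : Matrix V V ℝ := diagonal (fun v => Real.sqrt (π v)) * P *
      diagonal (fun v => (Real.sqrt (π v))⁻¹) with hSdef
  have hSapp : ∀ v w, S v w = p v * P v w * (p w)⁻¹ := by
    intro v w
    rw [hSdef, Matrix.mul_diagonal, Matrix.diagonal_mul]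
  have hQ := spectral_bound P π hPnonneg hProw hirr hπpos hπsum hrev δ hδ0 hgap
  set L : Matrix V V ℝ := diagonal π * (1 - P) with hLdef
  have hLapp : ∀ v w, L v w = π v * ((if v = w then 1 else 0) - P v w) := by
    intro v w
    rw [hLdef, Matrix.diagonal_mul, Matrix.sub_apply, Matrix.one_apply]
  have hLt : Lᵀ = L := by
    ext v w
    rw [transpose_apply, hLapp, hLapp]
    by_cases h : v = w
    · subst h; rfl
    · simp only [h, Ne.symm h, if_false]
      linarith [hrev v w]
  have hLpt : Lplusᵀ = Lplus := mp_symm _ _ hLt hLplus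
  have hrowL : ∀ v, ∑ w, L v w = 0 := by
    intro v
    simp only [hLapp, mul_sub, Finset.sum_sub_distrib, ← Finset.mul_sum]
    rw [hProw v]
    simp
  have hcolL : ∀ w, ∑ v, L v w = 0 := by
    intro w
    simp only [hLapp]
    have h1 : ∀ v, π v * ((if v = w then 1 else 0) - P v w)
        = (if v = w then π w else 0) - π w * P w v := by
      intro v
      by_cases h : v = w
      · subst h; simp [mul_sub, hrev v v]
      · simp only [h, if_false, mul_sub]
        rw [hrev v w]
        ring
    simp only [h1, Finset.sum_sub_distrib, Finset.sum_ite_eq', Finset.mem_univ, if_true,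
      ← Finset.mul_sum]
    rw [hProw w]
    simp
  have hcompl : ∑ v ∈ Mᶜ, π v = 1 - ε := by
    have h := Finset.sum_add_sum_compl M π
    rw [hπsum, ← hε] at h
    linarith
  have hξM : ∑ v ∈ M, ξ v = ε * (1 - 1 / ε) := by
    rw [show ∑ v ∈ M, ξ v = ∑ v ∈ M, π v * (1 - 1/ε) from
      Finset.sum_congr rfl fun v hv => by rw [hξ v, if_pos hv]]
    rw [← Finset.sum_mul, ← hε]
  have hξMc : ∑ v ∈ Mᶜ, ξ v = 1 - ε := by
    rw [show ∑ v ∈ Mᶜ, ξ v = ∑ v ∈ Mᶜ, π v from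
      Finset.sum_congr rfl fun v hv => by
        rw [hξ v, if_neg (Finset.mem_compl.1 hv)]]
    exact hcompl
  have hξsum : ∑ v, ξ v = 0 := by
    rw [← Finset.sum_add_sum_compl M ξ, hξM, hξMc]
    field_simp
    ring
  -- the central bound
  have hbound : ∀ x : V → ℝ, 2 * (ξ ⬝ᵥ x) - x ⬝ᵥ (L *ᵥ x) ≤ (1 / ε - 1) / δ := by
    intro x
    set c : ℝ := ∑ v, π v * x v with hc
    set x' : V → ℝ := fun v => x v - c with hx'
    have hx'v : ∀ v, x' v = x v - c := fun v => rfl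
    set y : V → ℝ := fun v => p v * x' v with hy
    have hyv : ∀ v, y v = p v * x' v := fun v => rfl
    set ζ : V → ℝ := fun v => ξ v * (p v)⁻¹ with hζ
    have hζv : ∀ v, ζ v = ξ v * (p v)⁻¹ := fun v => rfl
    have h1 : ξ ⬝ᵥ x = ξ ⬝ᵥ x' := by
      simp only [dotProduct, hx'v]
      rw [eq_comm]
      calc ∑ v, ξ v * (x v - c) = ∑ v, ξ v * x v - (∑ v, ξ v) * c := by
            rw [Finset.sum_mul, ← Finset.sum_sub_distrib]
            exact Finset.sum_congr rfl fun v _ => by ring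
        _ = ∑ v, ξ v * x v := by rw [hξsum, zero_mul, sub_zero]
    have hπx' : ∑ v, π v * x' v = 0 := by
      simp only [hx'v]
      calc ∑ v, π v * (x v - c) = ∑ v, π v * x v - (∑ v, π v) * c := by
            rw [Finset.sum_mul, ← Finset.sum_sub_distrib]
            exact Finset.sum_congr rfl fun v _ => by ring
        _ = 0 := by rw [hπsum, one_mul, ← hc, sub_self]
    have hLx : L *ᵥ x' = L *ᵥ x := by
      funext v
      simp only [Matrix.mulVec, dotProduct, hx'v]
      calc ∑ w, L v w * (x w - c) = ∑ w, L v w * x w - (∑ w, L v w) * c := by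
            rw [Finset.sum_mul, ← Finset.sum_sub_distrib]
            exact Finset.sum_congr rfl fun w _ => by ring
        _ = ∑ w, L v w * x w := by rw [hrowL v, zero_mul, sub_zero]
    have hsumLx : ∑ v, (L *ᵥ x) v = 0 := by
      simp only [Matrix.mulVec, dotProduct]
      rw [Finset.sum_comm]
      refine Finset.sum_eq_zero fun w _ => ?_
      rw [← Finset.sum_mul, hcolL w, zero_mul]
    have h2 : x' ⬝ᵥ (L *ᵥ x') = x ⬝ᵥ (L *ᵥ x) := by
      rw [hLx]
      simp only [dotProduct, hx'v]
      calc ∑ v, (x v - c) * (L *ᵥ x) v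
          = ∑ v, x v * (L *ᵥ x) v - c * ∑ v, (L *ᵥ x) v := by
            rw [Finset.mul_sum, ← Finset.sum_sub_distrib]
            exact Finset.sum_congr rfl fun v _ => by ring
        _ = ∑ v, x v * (L *ᵥ x) v := by rw [hsumLx, mul_zero, sub_zero]
    have hxy : x' ⬝ᵥ (L *ᵥ x') = y ⬝ᵥ ((1 - S) *ᵥ y) := by
      simp only [dotProduct, Matrix.mulVec, Finset.mul_sum]
      refine Finset.sum_congr rfl fun v _ => Finset.sum_congr rfl fun w _ => ?_
      rw [hyv v, hyv w, Matrix.sub_apply, Matrix.one_apply, hSapp, hLapp]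
      by_cases h : v = w
      · subst h
        rw [if_pos rfl]
        have hw1 : (p v)⁻¹ * p v = 1 := inv_mul_cancel₀ (hp0 v).ne'
        linear_combination (- (x' v * x' v)) * hpv2 v
          + (P v v * x' v * x' v * p v * p v) * hw1
          + (P v v * x' v * x' v) * hpv2 v
      · simp only [h, if_false]
        have hw1 : (p w)⁻¹ * p w = 1 := inv_mul_cancel₀ (hp0 w).ne'
        linear_combination (P v w * x' v * x' w * p v * p v) * hw1
          + (P v w * x' v * x' w) * hpv2 v
    have hpy : p ⬝ᵥ y = 0 := by
      simp only [dotProduct, hyv]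
      calc ∑ v, p v * (p v * x' v) = ∑ v, π v * x' v :=
            Finset.sum_congr rfl fun v _ => by rw [← mul_assoc, hpv2 v]
        _ = 0 := hπx'
    have hξx' : ξ ⬝ᵥ x' = ζ ⬝ᵥ y := by
      simp only [dotProduct, hyv, hζv]
      refine Finset.sum_congr rfl fun v _ => ?_
      have hw1 : (p v)⁻¹ * p v = 1 := inv_mul_cancel₀ (hp0 v).ne'
      linear_combination (- (ξ v * x' v)) * hw1
    have hζζ : ζ ⬝ᵥ ζ = 1 / ε - 1 := by
      simp only [dotProduct, hζv]
      have hterm : ∀ v, ξ v * (p v)⁻¹ * (ξ v * (p v)⁻¹) = ξ v * ξ v / π v := by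
        intro v
        rw [← hpv2 v]
        field_simp
      simp only [hterm]
      rw [← Finset.sum_add_sum_compl M]
      have hMterm : ∑ v ∈ M, ξ v * ξ v / π v = ε * ((1 - 1/ε) * (1 - 1/ε)) := by
        rw [show ∑ v ∈ M, ξ v * ξ v / π v = ∑ v ∈ M, π v * ((1 - 1/ε) * (1 - 1/ε)) from
          Finset.sum_congr rfl fun v hv => by
            rw [hξ v, if_pos hv]
            field_simp [(hπpos v).ne']]
        rw [← Finset.sum_mul, ← hε]
      have hMcterm : ∑ v ∈ Mᶜ, ξ v * ξ v / π v = 1 - ε := by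
        rw [show ∑ v ∈ Mᶜ, ξ v * ξ v / π v = ∑ v ∈ Mᶜ, π v from
          Finset.sum_congr rfl fun v hv => by
            rw [hξ v, if_neg (Finset.mem_compl.1 hv)]
            field_simp [(hπpos v).ne']]
        exact hcompl
      rw [hMterm, hMcterm]
      field_simp
      ring
    have hQy := hQ y hpy
    have hsq : (0:ℝ) ≤ ∑ v, (ζ v - δ * y v) * (ζ v - δ * y v) :=
      Finset.sum_nonneg fun v _ => mul_self_nonneg _
    have hexp : ∑ v, (ζ v - δ * y v) * (ζ v - δ * y v)
        = ζ ⬝ᵥ ζ - 2 * δ * (ζ ⬝ᵥ y) + δ ^ 2 * (y ⬝ᵥ y) := by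
      simp only [dotProduct]
      rw [Finset.mul_sum, Finset.mul_sum, ← Finset.sum_sub_distrib, ← Finset.sum_add_distrib]
      exact Finset.sum_congr rfl fun v _ => by ring
    rw [h1, ← h2, hxy, hξx', ← hζζ, le_div_iff₀ hδ0]
    nlinarith [hQy, hexp ▸ hsq, mul_le_mul_of_nonneg_left hQy hδ0.le]
  -- apply the bound at x = Lplus *ᵥ ξ
  set x : V → ℝ := Lplus *ᵥ ξ with hx
  have hx2 : x ⬝ᵥ (L *ᵥ x) = ξ ⬝ᵥ (Lplus *ᵥ ξ) := by
    calc x ⬝ᵥ (L *ᵥ x) = (ξ ᵥ* Lplus) ⬝ᵥ (L *ᵥ x) := by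
          rw [hx, ← Matrix.mulVec_transpose, hLpt]
      _ = ξ ⬝ᵥ (Lplus *ᵥ (L *ᵥ x)) := by rw [← dotProduct_mulVec]
      _ = ξ ⬝ᵥ ((Lplus * L * Lplus) *ᵥ ξ) := by
          rw [hx, Matrix.mulVec_mulVec, Matrix.mulVec_mulVec, Matrix.mul_assoc]
      _ = ξ ⬝ᵥ (Lplus *ᵥ ξ) := by rw [hLplus.2.1]
  constructor
  · have hb := hbound x
    have hxq : ξ ⬝ᵥ x = ξ ⬝ᵥ (Lplus *ᵥ ξ) := by rw [hx]
    rw [hxq, hx2] at hb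
    linarith
  · rw [div_le_div_iff₀ hδ0 (mul_pos hδ0 hεpos)]
    have h2 : (1/ε - 1) * (δ * ε) = δ - δ * ε := by
      field_simp
    rw [h2, one_mul]
    nlinarith [mul_pos hδ0 hεpos]
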